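/- Let (φ_t)_{t≥0} be nonnegative with φ_0 ≤ K L D²/2 and, for all t ≥ 1, φ_t ≤ 6LD²/(t+2)² + (3 + 3K/2)LD²/((t+1)(t+2)) + (1/(t(t+1)(t+2))) Σ_{k=1}^t (k−1)φ_{k−1}. Then for all t ≥ 0, φ_t ≤ 6LD²/(t+2)² + (12 + 3K)LD²/((t+1)(t+2)). -/

import Mathlib

/-- Induction at the heart of the stochastic conditional gradient sliding rate. -/
theorem scgs_induction_bound
    (L D K : ℝ) (hL : 0 < L) (hD : 0 < D) (hK : 1 ≤ K)
    (φ : ℕ → ℝ) (hφ : ∀ t, 0 ≤ φ t) (h0 : φ 0 ≤ K * L * D ^ 2 / 2)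
    (hrec : ∀ t : ℕ, 1 ≤ t →
      φ t ≤ 6 * L * D ^ 2 / ((t : ℝ) + 2) ^ 2
        + (3 + 3 * K / 2) * L * D ^ 2 / (((t : ℝ) + 1) * ((t : ℝ) + 2))
        + (1 / ((t : ℝ) * ((t : ℝ) + 1) * ((t : ℝ) + 2)))
            * ∑ k ∈ Finset.Icc 1 t, ((k : ℝ) - 1) * φ (k - 1)) :
    ∀ t : ℕ, φ t ≤ 6 * L * D ^ 2 / ((t : ℝ) + 2) ^ 2
        + (12 + 3 * K) * L * D ^ 2 / (((t : ℝ) + 1) * ((t : ℝ) + 2)) := by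
  have hLD : 0 < L * D ^ 2 := mul_pos hL (pow_pos hD 2)
  intro t
  induction t using Nat.strong_induction_on with
  | _ t ih =>
    match t with
    | 0 =>
      simp only [Nat.cast_zero]
      have h1 : K * L * D ^ 2 / 2 ≤ (12 + 3 * K) * L * D ^ 2 / ((0 + 1) * (0 + 2)) := by
        rw [div_le_div_iff₀ (by norm_num) (by norm_num)]
        nlinarith
      have h2 : (0:ℝ) ≤ 6 * L * D ^ 2 / ((0:ℝ) + 2) ^ 2 := by positivity
      linarith [h0]
    | (n+1) =>
      set t := n + 1 with htdef
      have ht1 : 1 ≤ t := Nat.succ_le_succ (Nat.zero_le n)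
      have hT1 : (1:ℝ) ≤ (t:ℝ) := by exact_mod_cast ht1
      have hT0 : (0:ℝ) < (t:ℝ) := by linarith
      -- bound each summand
      have hterm : ∀ k ∈ Finset.Icc 1 t,
          ((k : ℝ) - 1) * φ (k - 1) ≤ (18 + 3 * K) * L * D ^ 2 / 2 := by
        intro k hk
        rw [Finset.mem_Icc] at hk
        obtain ⟨hk1, hkt⟩ := hk
        rcases Nat.lt_or_ge k 2 with hk2 | hk2
        · interval_cases k
          · simp only [Nat.cast_one]
            have := hφ 0
            have : (0:ℝ) ≤ (18 + 3 * K) * L * D ^ 2 / 2 := by positivity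
            simpa using this
        · -- k ≥ 2
          have hklt : k - 1 < t := by omega
          have hB := ih (k - 1) hklt
          have hcast : ((k - 1 : ℕ) : ℝ) = (k : ℝ) - 1 := by
            have : (1:ℕ) ≤ k := hk1
            push_cast [Nat.cast_sub this]
            ring
          rw [hcast] at hB
          set s : ℝ := (k : ℝ) - 1 with hs
          have hs1 : (1:ℝ) ≤ s := by
            have : (2:ℝ) ≤ (k:ℝ) := by exact_mod_cast hk2
            simp [hs]; linarith
          have hs0 : (0:ℝ) < s := by linarith
          -- φ(k-1) ≤ (6+C)LD²/(2s)
          have hb1 : 6 * L * D ^ 2 / (s + 2) ^ 2 ≤ 3 * L * D ^ 2 / s := by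
            rw [div_le_div_iff₀ (by positivity) hs0]
            nlinarith [sq_nonneg s]
          have hb2 : (12 + 3 * K) * L * D ^ 2 / ((s + 1) * (s + 2)) ≤
              (12 + 3 * K) * L * D ^ 2 / (2 * s) := by
            apply div_le_div_of_nonneg_left (by nlinarith) (by positivity)
            nlinarith [sq_nonneg (s - 1)]
          have hφb : φ (k - 1) ≤ 3 * L * D ^ 2 / s + (12 + 3 * K) * L * D ^ 2 / (2 * s) :=
            le_trans hB (by linarith)
          calc s * φ (k - 1)
              ≤ s * (3 * L * D ^ 2 / s + (12 + 3 * K) * L * D ^ 2 / (2 * s)) :=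
                mul_le_mul_of_nonneg_left hφb (le_of_lt hs0)
            _ = (18 + 3 * K) * L * D ^ 2 / 2 := by
                field_simp
                ring
      have hsum : ∑ k ∈ Finset.Icc 1 t, ((k : ℝ) - 1) * φ (k - 1) ≤
          (t : ℝ) * ((18 + 3 * K) * L * D ^ 2 / 2) := by
        calc ∑ k ∈ Finset.Icc 1 t, ((k : ℝ) - 1) * φ (k - 1)
            ≤ ∑ k ∈ Finset.Icc 1 t, (18 + 3 * K) * L * D ^ 2 / 2 :=
              Finset.sum_le_sum hterm
          _ = (t : ℝ) * ((18 + 3 * K) * L * D ^ 2 / 2) := by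
              rw [Finset.sum_const, Nat.card_Icc]
              simp [nsmul_eq_mul]
      have hrect := hrec t ht1
      have hkey : (1 / ((t:ℝ) * ((t:ℝ) + 1) * ((t:ℝ) + 2)))
            * ∑ k ∈ Finset.Icc 1 t, ((k : ℝ) - 1) * φ (k - 1)
          ≤ (9 + 3 * K / 2) * L * D ^ 2 / (((t:ℝ) + 1) * ((t:ℝ) + 2)) := by
        have h1 : (1 / ((t:ℝ) * ((t:ℝ) + 1) * ((t:ℝ) + 2)))
              * ∑ k ∈ Finset.Icc 1 t, ((k : ℝ) - 1) * φ (k - 1)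
            ≤ (1 / ((t:ℝ) * ((t:ℝ) + 1) * ((t:ℝ) + 2)))
              * ((t : ℝ) * ((18 + 3 * K) * L * D ^ 2 / 2)) :=
          mul_le_mul_of_nonneg_left hsum (by positivity)
        have h2 : (1 / ((t:ℝ) * ((t:ℝ) + 1) * ((t:ℝ) + 2)))
              * ((t : ℝ) * ((18 + 3 * K) * L * D ^ 2 / 2))
            = (9 + 3 * K / 2) * L * D ^ 2 / (((t:ℝ) + 1) * ((t:ℝ) + 2)) := by
          field_simp
          ring
        linarith
      have hfin : (3 + 3 * K / 2) * L * D ^ 2 / (((t:ℝ) + 1) * ((t:ℝ) + 2))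
            + (9 + 3 * K / 2) * L * D ^ 2 / (((t:ℝ) + 1) * ((t:ℝ) + 2))
          = (12 + 3 * K) * L * D ^ 2 / (((t:ℝ) + 1) * ((t:ℝ) + 2)) := by
        rw [← add_div]
        ring_nf
      linarith
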